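/- arXiv:2002.06418 — 2 statements merged into one kernel-verified Lean document; each statement's English description precedes it below -/
import Mathlib

section
/- Let P be a convex polytope in ℝ³ with nonempty interior, and let C be the union of all facets of P whose outward unit normals n satisfy ⟨n, e₃⟩ > 0 (the 'jagged convex cap' with φ = 90°). Then C is homeomorphic to a closed disk in ℝ². -/
open scoped RealInnerProductSpace

noncomputable section

abbrev E3 := EuclideanSpace ℝ (Fin 3)
abbrev E2 := EuclideanSpace ℝ (Fin 2)

/-- The vertical direction `e₃ = (0,0,1)`. -/
def e3 : E3 := EuclideanSpace.single 2 1

/-- Vertical projection `(x,y,z) ↦ (x,y)`. -/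
def projXY (p : E3) : E2 := WithLp.toLp 2 (fun i : Fin 2 => p (Fin.castLE (by norm_num) i))

/-- A (compact convex) polytope: the convex hull of finitely many points. -/
def IsPolytope (P : Set E3) : Prop := ∃ S : Finset E3, P = convexHull ℝ (S : Set E3)

/-- `F` is a face of `P`: the intersection of `P` with a supporting hyperplane. -/
def IsFace (P F : Set E3) : Prop :=
  ∃ n : E3, ∃ c : ℝ, n ≠ 0 ∧ (∀ x ∈ P, ⟪n, x⟫ ≤ c) ∧ F = {x ∈ P | ⟪n, x⟫ = c}

/-- A facet is a 2-dimensional face. -/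
def IsFacet (P F : Set E3) : Prop := IsFace P F ∧ Module.finrank ℝ (vectorSpan ℝ F) = 2

/-- `n` is an outward unit normal exhibiting `F` as a facet of `P`. -/
def IsFacetNormal (P F : Set E3) (n : E3) : Prop :=
  ‖n‖ = 1 ∧ ∃ c : ℝ, (∀ x ∈ P, ⟪n, x⟫ ≤ c) ∧ F = {x ∈ P | ⟪n, x⟫ = c} ∧
    Module.finrank ℝ (vectorSpan ℝ F) = 2

/-- The jagged convex cap (φ = 90°): union of all facets whose outward
unit normal `n` satisfies `⟪n, e₃⟫ > 0`. -/
def cap (P : Set E3) : Set E3 :=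
  {x | ∃ F n, IsFacetNormal P F n ∧ 0 < ⟪n, e3⟫ ∧ x ∈ F}

/-- `v` is a vertex of `P`: a 0-dimensional face. -/
def IsVertex (P : Set E3) (v : E3) : Prop := IsFace P {v}

/-- The interior angle of a planar convex set `F` at a vertex `v`:
the supremum of angles subtended at `v` by pairs of points of `F`. -/
def faceAngle (F : Set E3) (v : E3) : ℝ :=
  sSup {θ | ∃ a ∈ F, ∃ b ∈ F, θ = InnerProductGeometry.angle (a - v) (b - v)}

/-- The sum of the face angles at `v` of the facets of `P` incident to `v`. -/
def angleSum (P : Set E3) (v : E3) : ℝ :=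
  ∑ᶠ F ∈ {F | IsFacet P F ∧ v ∈ F}, faceAngle F v

/-- A (possibly unbounded) polyhedron: a finite intersection of closed half-spaces. -/
def IsPolyhedron (Q : Set E3) : Prop :=
  ∃ s : Finset (E3 × ℝ), Q = ⋂ p ∈ s, {x | ⟪p.1, x⟫ ≤ p.2}

/-- `Q` contains a (full) line. -/
def ContainsLine (Q : Set E3) : Prop :=
  ∃ x u : E3, u ≠ 0 ∧ ∀ t : ℝ, x + t • u ∈ Q

/-- The recession cone of `Q`. -/
def recCone (Q : Set E3) : Set E3 :=
  {u | ∀ x ∈ Q, ∀ t : ℝ, 0 ≤ t → x + t • u ∈ Q}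

/-- The spherical image of a closed convex set: outward unit normals of
supporting planes. -/
def sphImage (C : Set E3) : Set E3 :=
  {n | ‖n‖ = 1 ∧ ∃ x ∈ C, ∀ y ∈ C, ⟪n, y - x⟫ ≤ 0}

/-- The spherical image of `P` at the point `v`: unit normals of supporting
planes touching `P` at `v`. -/
def vertexSphImage (P : Set E3) (v : E3) : Set E3 :=
  {n | ‖n‖ = 1 ∧ ∀ x ∈ P, ⟪n, x - v⟫ ≤ 0}

/-- 2-dimensional (spherical) Hausdorff measure on `ℝ³`. -/
def sphMeasure : MeasureTheory.Measure E3 := MeasureTheory.Measure.hausdorffMeasure 2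

-- infrastructure
lemma projXY_linear : IsLinearMap ℝ projXY := ⟨fun _ _ => rfl, fun _ _ => by ext i; simp [projXY]⟩

lemma continuous_projXY : Continuous projXY := (PiLp.continuous_toLp 2 _).comp (continuous_pi fun i => (continuous_apply _).comp (PiLp.continuous_ofLp 2 _))

lemma e3_apply_castLE (i : Fin 2) : e3 (Fin.castLE (by norm_num) i) = 0 := by
  rw [e3, EuclideanSpace.single_apply, if_neg]
  intro h
  have := congrArg Fin.val h
  simp [Fin.castLE] at this
  omega

lemma e3_apply_two : e3 2 = 1 := by rw [e3, EuclideanSpace.single_apply, if_pos rfl]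

lemma projXY_add_smul_e3 (p : E3) (t : ℝ) : projXY (p + t • e3) = projXY p := by
  ext i
  show p _ + t * e3 _ = p _
  rw [e3_apply_castLE]; ring

lemma sub_eq_smul_e3 {p q : E3} (h : projXY p = projXY q) : p - q = (p 2 - q 2) • e3 := by
  have h0 : p 0 = q 0 := congrArg (fun z : E2 => z 0) h
  have h1 : p 1 = q 1 := congrArg (fun z : E2 => z 1) h
  ext j
  show p j - q j = (p 2 - q 2) * e3 j
  fin_cases j <;>
    simp [e3, EuclideanSpace.single_apply, h0, h1, Fin.ext_iff]

open Module

lemma face_eq_hull {S : Finset E3} {P : Set E3} (hP : P = convexHull ℝ (S : Set E3))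
    {n : E3} {c : ℝ} (hsup : ∀ x ∈ P, ⟪n, x⟫ ≤ c) :
    {x ∈ P | ⟪n, x⟫ = c} =
      convexHull ℝ ((S.filter fun s => ⟪n, s⟫ = c) : Set E3) := by
  classical
  apply Set.Subset.antisymm
  · rintro x ⟨hxP, hxc⟩
    have hxP' := hxP
    rw [hP, Finset.convexHull_eq] at hxP'
    obtain ⟨w, hw0, hw1, hwx⟩ := hxP'
    rw [Finset.centerMass_eq_of_sum_1 _ _ hw1] at hwx
    have hSP : ∀ s ∈ S, s ∈ P := fun s hs => hP ▸ subset_convexHull ℝ _ hs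
    have hin : ⟪n, x⟫ = ∑ s ∈ S, w s * ⟪n, s⟫ := by
      rw [← hwx, inner_sum]
      exact Finset.sum_congr rfl fun s _ => real_inner_smul_right n s (w s)
    have hzero : ∑ s ∈ S, w s * (c - ⟪n, s⟫) = 0 := by
      have : ∑ s ∈ S, w s * (c - ⟪n, s⟫)
          = (∑ s ∈ S, w s) * c - ∑ s ∈ S, w s * ⟪n, s⟫ := by
        rw [Finset.sum_mul, ← Finset.sum_sub_distrib]
        exact Finset.sum_congr rfl fun s _ => by ring
      rw [this, hw1, ← hin, hxc]; ring
    have hkey : ∀ s ∈ S, w s * (c - ⟪n, s⟫) = 0 :=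
      (Finset.sum_eq_zero_iff_of_nonneg (fun s hs =>
        mul_nonneg (hw0 s hs) (by linarith [hsup s (hSP s hs)]))).1 hzero
    have hw0' : ∀ s ∈ S, ⟪n, s⟫ ≠ c → w s = 0 := by
      intro s hs hne
      rcases mul_eq_zero.1 (hkey s hs) with h | h
      · exact h
      · exact absurd (by linarith) hne
    rw [Finset.convexHull_eq]
    refine ⟨w, fun s hs => hw0 s (Finset.mem_filter.1 hs).1, ?_, ?_⟩
    · rw [Finset.sum_subset (Finset.filter_subset _ _)]
      · exact hw1
      · intro s hs hns
        exact hw0' s hs (by simpa [Finset.mem_filter, hs] using hns)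
    · rw [Finset.centerMass_eq_of_sum_1]
      · rw [← hwx]
        apply Finset.sum_subset (Finset.filter_subset _ _)
        intro s hs hns
        rw [hw0' s hs (by simpa [Finset.mem_filter, hs] using hns), zero_smul]
      · rw [Finset.sum_subset (Finset.filter_subset _ _)]
        · exact hw1
        · intro s hs hns
          exact hw0' s hs (by simpa [Finset.mem_filter, hs] using hns)
  · have hconv : Convex ℝ {x ∈ P | ⟪n, x⟫ = c} := by
      have : {x ∈ P | ⟪n, x⟫ = c} = P ∩ {x | ⟪n, x⟫ = c} := rfl
      rw [this]
      exact (hP ▸ convex_convexHull ℝ _).inter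
        (convex_hyperplane ⟨fun a b => inner_add_right n a b,
          fun r a => real_inner_smul_right n a r⟩ c)
    apply convexHull_min _ hconv
    intro s hs
    rcases Finset.mem_filter.1 (by exact_mod_cast hs) with ⟨hsS, hsc⟩
    exact ⟨hP ▸ subset_convexHull ℝ _ hsS, hsc⟩

lemma isCompact_cap {S : Finset E3} {P : Set E3} (hP : P = convexHull ℝ (S : Set E3)) :
    IsCompact (cap P) := by
  classical
  have hcap : cap P = ⋃ T ∈ {T : Finset E3 | ↑T ⊆ (S : Set E3) ∧
      ∃ n, IsFacetNormal P (convexHull ℝ (T : Set E3)) n ∧ 0 < ⟪n, e3⟫},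
      convexHull ℝ (T : Set E3) := by
    ext x
    constructor
    · rintro ⟨F, n, ⟨hn1, c, hsup, hFeq, hrank⟩, hpos, hxF⟩
      have hhull : F = convexHull ℝ ((S.filter fun s => ⟪n, s⟫ = c) : Set E3) :=
        hFeq.trans (face_eq_hull hP hsup)
      refine Set.mem_biUnion ⟨?_, n, ?_, hpos⟩ (hhull ▸ hxF)
      · exact_mod_cast Finset.filter_subset _ _
      · rw [← hhull]; exact ⟨hn1, c, hsup, hFeq, hrank⟩
    · intro hx
      rcases Set.mem_iUnion₂.1 hx with ⟨T, ⟨_, n, hfn, hpos⟩, hxT⟩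
      exact ⟨convexHull ℝ (T : Set E3), n, hfn, hpos, hxT⟩
  rw [hcap]
  apply Set.Finite.isCompact_biUnion
  · apply Set.Finite.subset (S.powerset.finite_toSet)
    intro T hT
    simp only [Finset.coe_powerset, Set.mem_preimage, Set.mem_powerset_iff]
    exact hT.1
  · intro T _
    exact Set.Finite.isCompact_convexHull ℝ (T.finite_toSet)

lemma rank_face_le {P : Set E3} {m : E3} {c : ℝ} (hm : m ≠ 0) :
    finrank ℝ (vectorSpan ℝ {y ∈ P | ⟪m, y⟫ = c}) ≤ 2 := by
  have hle : vectorSpan ℝ {y ∈ P | ⟪m, y⟫ = c} ≤ (ℝ ∙ m)ᗮ := by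
    rw [vectorSpan_def]
    apply Submodule.span_le.2
    rintro v ⟨a, ha, b, hb, rfl⟩
    rw [SetLike.mem_coe, Submodule.mem_orthogonal_singleton_iff_inner_right]
    show ⟪m, a - b⟫ = 0
    rw [inner_sub_right, ha.2, hb.2, sub_self]
  have h1 : finrank ℝ (ℝ ∙ m) = 1 := finrank_span_singleton hm
  have h2 : finrank ℝ (ℝ ∙ m) + finrank ℝ (ℝ ∙ m)ᗮ = finrank ℝ E3 :=
    Submodule.finrank_add_finrank_orthogonal _
  have h3 : finrank ℝ E3 = 3 := finrank_euclideanSpace_fin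
  have := Submodule.finrank_mono hle
  omega

lemma bump {S : Finset E3} {P : Set E3} (hP : P = convexHull ℝ (S : Set E3))
    (hspan : vectorSpan ℝ P = ⊤) {m p : E3} (hm : m ≠ 0) (hp : p ∈ P)
    (hsup : ∀ y ∈ P, ⟪m, y⟫ ≤ ⟪m, p⟫)
    (hrank : finrank ℝ (vectorSpan ℝ {y ∈ P | ⟪m, y⟫ = ⟪m, p⟫}) ≤ 1) :
    ∃ m' : E3, m' ≠ 0 ∧ (∀ y ∈ P, ⟪m', y⟫ ≤ ⟪m', p⟫) ∧
      finrank ℝ (vectorSpan ℝ {y ∈ P | ⟪m, y⟫ = ⟪m, p⟫}) <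
        finrank ℝ (vectorSpan ℝ {y ∈ P | ⟪m', y⟫ = ⟪m', p⟫}) := by
  classical
  set c := ⟪m, p⟫ with hc
  set G := {y ∈ P | ⟪m, y⟫ = c} with hG
  set W := vectorSpan ℝ G with hW
  have hpG : p ∈ G := ⟨hp, rfl⟩
  have hSP : ∀ s ∈ S, s ∈ P := fun s hs => hP ▸ subset_convexHull ℝ _ hs
  -- the main construction, given a good direction u
  have key : ∀ u : E3, u ≠ 0 → ⟪u, m⟫ = 0 → (∀ w ∈ W, ⟪u, w⟫ = 0) →
      (∃ s ∈ S, 0 < ⟪u, s - p⟫) →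
      ∃ m' : E3, m' ≠ 0 ∧ (∀ y ∈ P, ⟪m', y⟫ ≤ ⟪m', p⟫) ∧
        finrank ℝ W < finrank ℝ (vectorSpan ℝ {y ∈ P | ⟪m', y⟫ = ⟪m', p⟫}) := by
    rintro u hu hum hWu ⟨s₁, hs₁S, hs₁⟩
    have hGu : ∀ y ∈ G, ⟪u, y - p⟫ = 0 := fun y hy => hWu _ (vsub_mem_vectorSpan ℝ hy hpG)
    set T := S.filter (fun s => 0 < ⟪u, s - p⟫) with hT
    have hTne : T.Nonempty := ⟨s₁, Finset.mem_filter.2 ⟨hs₁S, hs₁⟩⟩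
    obtain ⟨sm, hsmT, hmin⟩ := T.exists_min_image (fun s => (c - ⟪m, s⟫) / ⟪u, s - p⟫) hTne
    have hsmS : sm ∈ S := (Finset.mem_filter.1 hsmT).1
    have hsmpos : 0 < ⟪u, sm - p⟫ := (Finset.mem_filter.1 hsmT).2
    have hstrict : ∀ s ∈ S, 0 < ⟪u, s - p⟫ → ⟪m, s⟫ < c := by
      intro s hsS hpos
      rcases lt_or_eq_of_le (hsup s (hSP s hsS)) with h | h
      · exact h
      · exact absurd (hGu s ⟨hSP s hsS, h⟩) (ne_of_gt hpos)
    set t := (c - ⟪m, sm⟫) / ⟪u, sm - p⟫ with ht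
    have htpos : 0 < t := div_pos (by linarith [hstrict sm hsmS hsmpos]) hsmpos
    set m' := m + t • u with hm'
    have hm'u : ⟪u, m'⟫ = t * ‖u‖ ^ 2 := by
      rw [hm', inner_add_right, real_inner_smul_right, hum, real_inner_self_eq_norm_sq]
      ring
    have hm'ne : m' ≠ 0 := by
      intro h
      rw [h, inner_zero_right] at hm'u
      have : 0 < t * ‖u‖ ^ 2 := mul_pos htpos (pow_pos (norm_pos_iff.2 hu) 2)
      linarith
    have hform : ∀ y : E3, ⟪m', y⟫ - ⟪m', p⟫ = (⟪m, y⟫ - c) + t * ⟪u, y - p⟫ := by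
      intro y
      rw [hm', inner_add_left, inner_add_left, real_inner_smul_left, real_inner_smul_left,
        inner_sub_right, hc]
      ring
    have hsupS : ∀ s ∈ S, ⟪m', s⟫ ≤ ⟪m', p⟫ := by
      intro s hsS
      have h1 := hform s
      rcases le_or_gt ⟪u, s - p⟫ 0 with hle | hgt
      · nlinarith [hsup s (hSP s hsS)]
      · have hsT : s ∈ T := Finset.mem_filter.2 ⟨hsS, hgt⟩
        have h2 : t ≤ (c - ⟪m, s⟫) / ⟪u, s - p⟫ := hmin s hsT
        have h3 : t * ⟪u, s - p⟫ ≤ c - ⟪m, s⟫ := by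
          rw [← le_div_iff₀ hgt]; exact h2
        linarith
    have hsupP : ∀ y ∈ P, ⟪m', y⟫ ≤ ⟪m', p⟫ := by
      intro y hy
      have hconv : Convex ℝ {y : E3 | ⟪m', y⟫ ≤ ⟪m', p⟫} :=
        convex_halfSpace_le ⟨fun a b => inner_add_right m' a b,
          fun r a => real_inner_smul_right m' a r⟩ _
      rw [hP] at hy
      exact convexHull_min hsupS hconv hy
    refine ⟨m', hm'ne, hsupP, ?_⟩
    set G' := {y ∈ P | ⟪m', y⟫ = ⟪m', p⟫} with hG'
    have hpG' : p ∈ G' := ⟨hp, rfl⟩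
    have hGsub : G ⊆ G' := by
      rintro y ⟨hyP, hyc⟩
      refine ⟨hyP, ?_⟩
      have := hform y
      rw [hyc, hGu y ⟨hyP, hyc⟩] at this
      linarith
    have hsmG' : sm ∈ G' := by
      refine ⟨hSP sm hsmS, ?_⟩
      have h1 := hform sm
      have h2 : t * ⟪u, sm - p⟫ = c - ⟪m, sm⟫ := by
        rw [ht, div_mul_cancel₀ _ (ne_of_gt hsmpos)]
      linarith
    have hWle : W ≤ vectorSpan ℝ G' := vectorSpan_mono ℝ hGsub
    have hin' : sm - p ∈ vectorSpan ℝ G' := vsub_mem_vectorSpan ℝ hsmG' hpG'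
    have hnotin : sm - p ∉ W := fun h => absurd (hWu _ h) (ne_of_gt hsmpos)
    exact Submodule.finrank_lt_finrank_of_lt
      (lt_of_le_of_ne hWle (fun h => hnotin (h ▸ hin')))
  -- choose the direction u
  set V := W ⊔ (ℝ ∙ m) with hV
  have hVrank : finrank ℝ V ≤ 2 := by
    have h1 : finrank ℝ (ℝ ∙ m) = 1 := finrank_span_singleton hm
    have h2 : finrank ℝ V + finrank ℝ (W ⊓ (ℝ ∙ m) : Submodule ℝ E3)
        = finrank ℝ W + finrank ℝ (ℝ ∙ m) :=
      Submodule.finrank_sup_add_finrank_inf_eq W (ℝ ∙ m)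
    omega
  have hVne : V ≠ ⊤ := by
    intro h
    rw [h, finrank_top, finrank_euclideanSpace_fin] at hVrank
    omega
  have hbot : Vᗮ ≠ ⊥ := by
    simp only [ne_eq, Submodule.orthogonal_eq_bot_iff]
    exact hVne
  obtain ⟨u, huV, hu⟩ := Submodule.exists_mem_ne_zero_of_ne_bot hbot
  have hum : ⟪u, m⟫ = 0 := by
    rw [real_inner_comm]
    exact (Submodule.mem_orthogonal V u).1 huV m
      (le_sup_right (α := Submodule ℝ E3) (Submodule.mem_span_singleton_self m))
  have hWu : ∀ w ∈ W, ⟪u, w⟫ = 0 := by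
    intro w hw
    rw [real_inner_comm]
    exact (Submodule.mem_orthogonal V u).1 huV w (le_sup_left (α := Submodule ℝ E3) hw)
  have hex : ∃ s ∈ S, ⟪u, s - p⟫ ≠ 0 := by
    by_contra hcon
    push_neg at hcon
    have hle : vectorSpan ℝ (S : Set E3) ≤ (ℝ ∙ u)ᗮ := by
      rw [vectorSpan_def]
      apply Submodule.span_le.2
      rintro v ⟨a, ha, b, hb, rfl⟩
      rw [SetLike.mem_coe, Submodule.mem_orthogonal_singleton_iff_inner_right]
      show ⟪u, a - b⟫ = 0
      have : a - b = (a - p) - (b - p) := by abel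
      rw [this, inner_sub_right, hcon a ha, hcon b hb, sub_self]
    have hSspan : vectorSpan ℝ (S : Set E3) = ⊤ := by
      rw [← hspan, hP, ← direction_affineSpan, ← direction_affineSpan,
        affineSpan_convexHull]
    rw [hSspan, top_le_iff] at hle
    have huu : ⟪u, u⟫ = 0 := by
      have : u ∈ (ℝ ∙ u)ᗮ := by rw [hle]; trivial
      exact ((Submodule.mem_orthogonal _ u).1 this u
        (Submodule.mem_span_singleton_self u)).symm ▸ rfl
    exact hu (inner_self_eq_zero.1 huu)
  obtain ⟨s₁, hs₁S, hs₁⟩ := hex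
  rcases lt_or_gt_of_ne hs₁ with hneg | hpos
  · refine key (-u) (neg_ne_zero.2 hu) (by rw [inner_neg_left, hum, neg_zero])
      (fun w hw => by rw [inner_neg_left, hWu w hw, neg_zero]) ⟨s₁, hs₁S, ?_⟩
    rw [inner_neg_left]
    linarith
  · exact key u hu hum hWu ⟨s₁, hs₁S, hpos⟩

lemma exists_facet {S : Finset E3} {P : Set E3} (hP : P = convexHull ℝ (S : Set E3))
    (hspan : vectorSpan ℝ P = ⊤) {p : E3} (hp : p ∈ P) :
    ∀ (k : ℕ) (m : E3), m ≠ 0 → (∀ y ∈ P, ⟪m, y⟫ ≤ ⟪m, p⟫) →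
      2 ≤ k + finrank ℝ (vectorSpan ℝ {y ∈ P | ⟪m, y⟫ = ⟪m, p⟫}) →
      ∃ F n, IsFacetNormal P F n ∧ p ∈ F := by
  intro k
  induction k with
  | zero =>
      intro m hm hsup hrk
      have hle := rank_face_le (P := P) (c := ⟪m, p⟫) hm
      have hrank : finrank ℝ (vectorSpan ℝ {y ∈ P | ⟪m, y⟫ = ⟪m, p⟫}) = 2 := by omega
      set n := ‖m‖⁻¹ • m with hn
      have hmnorm : ‖m‖ ≠ 0 := norm_ne_zero_iff.2 hm
      have hninner : ∀ y : E3, ⟪n, y⟫ = ‖m‖⁻¹ * ⟪m, y⟫ := fun y =>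
        real_inner_smul_left m y ‖m‖⁻¹
      have hset : {y ∈ P | ⟪n, y⟫ = ⟪n, p⟫} = {y ∈ P | ⟪m, y⟫ = ⟪m, p⟫} := by
        ext y
        simp only [Set.mem_setOf_eq, hninner]
        constructor
        · rintro ⟨hyP, h⟩
          exact ⟨hyP, mul_left_cancel₀ (inv_ne_zero hmnorm) h⟩
        · rintro ⟨hyP, h⟩
          exact ⟨hyP, by rw [h]⟩
      refine ⟨{y ∈ P | ⟪n, y⟫ = ⟪n, p⟫}, n, ⟨norm_smul_inv_norm hm, ⟪n, p⟫, ?_, rfl, ?_⟩,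
        ⟨hp, rfl⟩⟩
      · intro y hy
        rw [hninner, hninner]
        exact mul_le_mul_of_nonneg_left (hsup y hy) (inv_nonneg.2 (norm_nonneg m))
      · rw [hset]; exact hrank
  | succ k ih =>
      intro m hm hsup hrk
      rcases le_or_gt 2 (finrank ℝ (vectorSpan ℝ {y ∈ P | ⟪m, y⟫ = ⟪m, p⟫})) with h2 | h2
      · exact ih m hm hsup (by omega)
      · obtain ⟨m', hm'ne, hsup', hlt⟩ := bump hP hspan hm hp hsup (by omega)
        exact ih m' hm'ne hsup' (by omega)

lemma subset_closure_interior_of_convex {P : Set E3} (hPconv : Convex ℝ P) {q : E3}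
    (hq : q ∈ interior P) : P ⊆ closure (interior P) := by
  intro x hx
  have hseq : ∀ n : ℕ, (1 - 1 / ((n : ℝ) + 1)) • x + (1 / ((n : ℝ) + 1)) • q
      ∈ interior P := by
    intro n
    have h1 : (0 : ℝ) < 1 / ((n : ℝ) + 1) := by positivity
    have h2 : 1 / ((n : ℝ) + 1) ≤ 1 := by
      rw [div_le_one (by positivity)]
      linarith [Nat.cast_nonneg (α := ℝ) n]
    exact hPconv.combo_closure_interior_mem_interior (subset_closure hx) hq
      (by linarith) h1 (by ring)
  have hlim : Filter.Tendsto
      (fun n : ℕ => (1 - 1 / ((n : ℝ) + 1)) • x + (1 / ((n : ℝ) + 1)) • q)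
      Filter.atTop (nhds x) := by
    have h0 : Filter.Tendsto (fun n : ℕ => 1 / ((n : ℝ) + 1)) Filter.atTop (nhds 0) :=
      tendsto_one_div_add_atTop_nhds_zero_nat
    have := (((tendsto_const_nhds (x := (1:ℝ))).sub h0).smul
      (tendsto_const_nhds (x := x))).add (h0.smul (tendsto_const_nhds (x := q)))
    simpa using this
  exact mem_closure_of_tendsto hlim (Filter.Eventually.of_forall hseq)

/-- the hard step: the top point of `P` above an interior-projection point lies in the cap -/
lemma top_mem_cap {S : Finset E3} {P : Set E3} (hP : P = convexHull ℝ (S : Set E3))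
    (hint : (interior P).Nonempty) {q p : E3} (hq : q ∈ interior P) (hpP : p ∈ P)
    (hproj : projXY p = projXY q)
    (htop : ∀ r ∈ P, projXY r = projXY q → r 2 ≤ p 2) :
    p ∈ cap P := by
  have hPconv : Convex ℝ P := hP ▸ convex_convexHull ℝ _
  have hspan : vectorSpan ℝ P = ⊤ := by
    have h1 : affineSpan ℝ (S : Set E3) = ⊤ :=
      affineSpan_eq_top_of_nonempty_interior (by rw [← hP]; exact hint)
    rw [← direction_affineSpan, hP, affineSpan_convexHull, h1]
    exact AffineSubspace.direction_top ℝ E3 E3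
  -- p is not interior
  have hpnotint : p ∉ interior P := by
    intro hpint
    rcases Metric.isOpen_iff.1 isOpen_interior p hpint with ⟨ε, hε, hball⟩
    have hmem : p + (ε / 2) • e3 ∈ P := by
      apply interior_subset (hball _)
      rw [Metric.mem_ball, dist_eq_norm, add_sub_cancel_left, norm_smul]
      have : ‖e3‖ = 1 := by
        rw [e3, EuclideanSpace.norm_single, norm_one]
      rw [this]
      simp only [Real.norm_eq_abs, abs_of_pos (by linarith : (0:ℝ) < ε/2), mul_one]
      linarith
    have hle := htop _ hmem (by rw [projXY_add_smul_e3, hproj])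
    have : (p + (ε / 2) • e3) 2 = p 2 + ε / 2 := by
      show p 2 + (ε / 2) * e3 2 = p 2 + ε / 2
      rw [e3_apply_two]; ring
    rw [this] at hle
    linarith
  -- separating functional at p
  obtain ⟨f, hf⟩ := geometric_hahn_banach_open_point
    (hPconv.interior) isOpen_interior hpnotint
  set m := (InnerProductSpace.toDual ℝ E3).symm f with hmdef
  have hminner : ∀ y : E3, ⟪m, y⟫ = f y := fun y =>
    InnerProductSpace.toDual_symm_apply
  have hm : m ≠ 0 := by
    intro h
    have h1 := hf q hq
    have h2 : f q = ⟪m, q⟫ := (hminner q).symm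
    have h3 : f p = ⟪m, p⟫ := (hminner p).symm
    rw [h2, h3, h, inner_zero_left, inner_zero_left] at h1
    exact lt_irrefl _ h1
  have hsup : ∀ y ∈ P, ⟪m, y⟫ ≤ ⟪m, p⟫ := by
    intro y hy
    rw [hminner, hminner]
    have hycl : y ∈ closure (interior P) :=
      subset_closure_interior_of_convex hPconv hq hy
    have hclosed : IsClosed {z : E3 | f z ≤ f p} :=
      isClosed_le f.continuous continuous_const
    exact closure_minimal (fun z hz => le_of_lt (hf z hz)) hclosed hycl
  -- any supporting normal at p points upwards
  have hpos : ∀ n : E3, n ≠ 0 → (∀ y ∈ P, ⟪n, y⟫ ≤ ⟪n, p⟫) → 0 < ⟪n, e3⟫ := by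
    intro n hn hnsup
    rcases Metric.isOpen_iff.1 isOpen_interior q hq with ⟨ε, hε, hball⟩
    have hnn : (0:ℝ) < ‖n‖ := norm_pos_iff.2 hn
    set δ := ε / (2 * ‖n‖) with hδ
    have hδpos : 0 < δ := by positivity
    have hmem : q + δ • n ∈ P := by
      apply interior_subset (hball _)
      rw [Metric.mem_ball, dist_eq_norm, add_sub_cancel_left, norm_smul,
        Real.norm_eq_abs, abs_of_pos hδpos]
      have heq : δ * ‖n‖ = ε / 2 := by
        rw [hδ]
        field_simp
      rw [heq]
      linarith
    have h1 : ⟪n, q⟫ + δ * ‖n‖ ^ 2 ≤ ⟪n, p⟫ := by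
      have := hnsup _ hmem
      rwa [inner_add_right, real_inner_smul_right, real_inner_self_eq_norm_sq] at this
    have hql : ⟪n, q⟫ < ⟪n, p⟫ := by
      have hp2 : 0 < δ * ‖n‖ ^ 2 := mul_pos hδpos (pow_pos hnn 2)
      linarith
    have hsub : p - q = (p 2 - q 2) • e3 := sub_eq_smul_e3 hproj
    have hq2 : q 2 ≤ p 2 := htop q (interior_subset hq) rfl
    have hne : p ≠ q := fun h => hpnotint (h ▸ hq)
    have hgt : q 2 < p 2 := by
      rcases lt_or_eq_of_le hq2 with h | h
      · exact h
      · exfalso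
        apply hne
        have : p - q = 0 := by rw [hsub, ← h, sub_self, zero_smul]
        have := sub_eq_zero.1 this
        exact this
    have hinner : ⟪n, p⟫ - ⟪n, q⟫ = (p 2 - q 2) * ⟪n, e3⟫ := by
      rw [← inner_sub_right, hsub, real_inner_smul_right]
    nlinarith
  -- find the facet
  obtain ⟨F, n, hFn, hpF⟩ := exists_facet hP hspan hpP 2 m hm hsup (by omega)
  obtain ⟨hn1, c, hcsup, hFeq, hrank⟩ := hFn
  have hnc : ⟪n, p⟫ = c := (hFeq ▸ hpF).2
  have hnsupp : ∀ y ∈ P, ⟪n, y⟫ ≤ ⟪n, p⟫ := fun y hy => hnc ▸ hcsup y hy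
  have hnne : n ≠ 0 := by
    intro h
    rw [h, norm_zero] at hn1
    norm_num at hn1
  exact ⟨F, n, ⟨hn1, c, hcsup, hFeq, hrank⟩, hpos n hnne hnsupp, hpF⟩

lemma cap_subset {P : Set E3} : cap P ⊆ P := by
  rintro x ⟨F, n, ⟨hn1, c, hsup, hFeq, _⟩, _, hxF⟩
  exact (hFeq ▸ hxF).1

lemma cap_le_of_proj_eq {P : Set E3} {p p' : E3} (hp : p ∈ cap P) (hp' : p' ∈ P)
    (hproj : projXY p = projXY p') : p' 2 ≤ p 2 := by
  obtain ⟨F, n, ⟨hn1, c, hsup, hFeq, _⟩, hpos, hpF⟩ := hp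
  have hpc : ⟪n, p⟫ = c := (hFeq ▸ hpF).2
  have h1 : ⟪n, p'⟫ ≤ ⟪n, p⟫ := hpc ▸ hsup p' hp'
  have h2 : p' - p = (p' 2 - p 2) • e3 := sub_eq_smul_e3 hproj.symm
  have h3 : ⟪n, p' - p⟫ = (p' 2 - p 2) * ⟪n, e3⟫ := by
    rw [h2, real_inner_smul_right]
  rw [inner_sub_right] at h3
  nlinarith

lemma cap_proj_injOn {P : Set E3} : Set.InjOn projXY (cap P) := by
  intro p hp p' hp' hproj
  have h1 := cap_le_of_proj_eq hp (cap_subset hp') hproj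
  have h2 := cap_le_of_proj_eq hp' (cap_subset hp) hproj.symm
  have h3 : p - p' = (p 2 - p' 2) • e3 := sub_eq_smul_e3 hproj
  have : p 2 - p' 2 = 0 := by linarith
  rw [this, zero_smul] at h3
  exact sub_eq_zero.1 h3

lemma proj_cap_eq {S : Finset E3} {P : Set E3} (hP : P = convexHull ℝ (S : Set E3))
    (hint : (interior P).Nonempty) : projXY '' cap P = projXY '' P := by
  have hPconv : Convex ℝ P := hP ▸ convex_convexHull ℝ _
  have hPcomp : IsCompact P := hP ▸ Set.Finite.isCompact_convexHull ℝ S.finite_toSet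
  obtain ⟨q0, hq0⟩ := hint
  apply Set.Subset.antisymm (Set.image_mono cap_subset)
  have hU : projXY '' interior P ⊆ projXY '' cap P := by
    rintro x ⟨q, hq, rfl⟩
    have hfib : (P ∩ projXY ⁻¹' {projXY q}).Nonempty := ⟨q, interior_subset hq, rfl⟩
    have hfibc : IsCompact (P ∩ projXY ⁻¹' {projXY q}) :=
      hPcomp.inter_right (isClosed_singleton.preimage continuous_projXY)
    obtain ⟨p, ⟨hpP, hpfib⟩, hmax⟩ :=
      hfibc.exists_isMaxOn hfib (((continuous_apply (2 : Fin 3)).comp (PiLp.continuous_ofLp 2 _)).continuousOn)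
    have hproj : projXY p = projXY q := hpfib
    have htop : ∀ r ∈ P, projXY r = projXY q → r 2 ≤ p 2 := fun r hr he =>
      hmax (Set.mem_inter hr he)
    have hcap : p ∈ cap P := top_mem_cap hP ⟨q0, hq0⟩ hq hpP hproj htop
    exact ⟨p, hcap, hproj⟩
  have hclosed : IsClosed (projXY '' cap P) :=
    ((isCompact_cap hP).image continuous_projXY).isClosed
  intro x hx
  rcases hx with ⟨y, hy, rfl⟩
  have hy' : y ∈ closure (interior P) :=
    subset_closure_interior_of_convex hPconv hq0 hy
  have h1 : projXY y ∈ projXY '' closure (interior P) := Set.mem_image_of_mem _ hy'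
  have h2 : projXY '' closure (interior P) ⊆ closure (projXY '' interior P) :=
    image_closure_subset_closure_image continuous_projXY
  have h3 : closure (projXY '' interior P) ⊆ closure (projXY '' cap P) :=
    closure_mono hU
  rw [hclosed.closure_eq] at h3
  exact h3 (h2 h1)

lemma projXY_surjective : Function.Surjective projXY := by
  intro y
  refine ⟨WithLp.toLp 2 (fun j : Fin 3 => if h : (j : ℕ) < 2 then y ⟨j, h⟩ else 0), ?_⟩
  ext i
  show (if h : ((Fin.castLE (by norm_num) i : Fin 3) : ℕ) < 2
    then y ⟨(Fin.castLE (by norm_num) i : Fin 3), h⟩ else 0) = y i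
  rw [dif_pos (by exact i.isLt)]
  rfl

lemma isOpenMap_projXY : IsOpenMap projXY := by
  have : IsOpenMap (LinearMap.toContinuousLinearMap
      (IsLinearMap.mk' projXY projXY_linear)) :=
    ContinuousLinearMap.isOpenMap _ projXY_surjective
  exact this

/-- The jagged convex cap (φ = 90°) of a convex polytope is homeomorphic to a
closed disk. -/
theorem stmt4 (P : Set E3) (hP : IsPolytope P) (hint : (interior P).Nonempty)
    (hne : (cap P).Nonempty) :
    Nonempty ((cap P) ≃ₜ (Metric.closedBall (0 : E2) 1)) := by
  obtain ⟨S, hP⟩ := hP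
  have hPconv : Convex ℝ P := hP ▸ convex_convexHull ℝ _
  have hPcomp : IsCompact P := hP ▸ Set.Finite.isCompact_convexHull ℝ S.finite_toSet
  set Q := projXY '' P with hQ
  have hcapcomp : IsCompact (cap P) := isCompact_cap hP
  have himg : projXY '' cap P = Q := proj_cap_eq hP hint
  have hQcomp : IsCompact Q := hPcomp.image continuous_projXY
  have hQconv : Convex ℝ Q := hPconv.is_linear_image projXY_linear
  have hQint : (interior Q).Nonempty := by
    obtain ⟨q0, hq0⟩ := hint
    have hopen : IsOpen (projXY '' interior P) := isOpenMap_projXY _ isOpen_interior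
    have hsub : projXY '' interior P ⊆ Q := Set.image_mono interior_subset
    exact ⟨projXY q0, interior_maximal hsub hopen (Set.mem_image_of_mem _ hq0)⟩
  obtain ⟨h, _, hcl, _⟩ :=
    exists_homeomorph_image_interior_closure_frontier_eq_unitBall hQconv hQint
      hQcomp.isBounded
  rw [hQcomp.isClosed.closure_eq] at hcl
  haveI : CompactSpace (cap P) := isCompact_iff_compactSpace.1 hcapcomp
  have hmem : ∀ x : cap P, projXY x.1 ∈ Q := fun x =>
    himg ▸ Set.mem_image_of_mem projXY x.2
  let f : cap P → ↥Q := fun x => ⟨projXY x.1, hmem x⟩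
  have hbij : Function.Bijective f := by
    constructor
    · intro a b hab
      exact Subtype.ext (cap_proj_injOn a.2 b.2 (congrArg Subtype.val hab))
    · rintro ⟨y, hy⟩
      rw [← himg] at hy
      obtain ⟨x, hx, hxy⟩ := hy
      exact ⟨⟨x, hx⟩, Subtype.ext hxy⟩
  have hcont : Continuous f :=
    (continuous_projXY.comp continuous_subtype_val).subtype_mk _
  have homeo1 : (cap P) ≃ₜ ↥Q := by
    have : Continuous (⇑(Equiv.ofBijective f hbij)) := hcont
    exact this.homeoOfEquivCompactToT2
  have homeo2 : ↥Q ≃ₜ ↥(Metric.closedBall (0 : E2) 1) :=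
    (h.image Q).trans (Homeomorph.setCongr hcl)
  exact ⟨homeo1.trans homeo2⟩
end
end

section
/- Let Q be an unbounded, line-free closed convex polyhedron in ℝ³ and let V = rec(Q) be its recession cone (Alexandrov's limit angle). Then the spherical image of Q equals the spherical image of V: the set of outward unit normals of supporting planes of Q coincides with the set of outward unit normals of supporting planes of V at its apex. -/
open scoped RealInnerProductSpace

noncomputable section

def HS (s : Finset (E3 × ℝ)) : Set E3 := ⋂ p ∈ s, {x : E3 | ⟪p.1, x⟫ ≤ p.2}

lemma mem_HS {s : Finset (E3 × ℝ)} {x : E3} : x ∈ HS s ↔ ∀ p ∈ s, ⟪p.1, x⟫ ≤ p.2 := by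
  simp [HS]

lemma rayShoot (s : Finset (E3 × ℝ)) (n w : E3) (hw : 0 < ⟪n, w⟫)
    (hcond : ∀ u : E3, (∀ p ∈ s, ⟪p.1, u⟫ ≤ 0) → ⟪n, u⟫ ≤ 0)
    {y : E3} (hy : y ∈ HS s) :
    ∃ q ∈ s, 0 < ⟪q.1, w⟫ ∧ ∃ t : ℝ, 0 ≤ t ∧ y + t • w ∈ HS s ∧ ⟪q.1, y + t • w⟫ = q.2 := by
  classical
  set J := s.filter (fun p => 0 < ⟪p.1, w⟫) with hJ
  have hJne : J.Nonempty := by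
    by_contra h
    have h' : ∀ p ∈ s, ⟪p.1, w⟫ ≤ 0 := by
      intro p hp
      by_contra h2
      push_neg at h2
      exact h ⟨p, Finset.mem_filter.mpr ⟨hp, h2⟩⟩
    exact absurd (hcond w h') (not_le.mpr hw)
  obtain ⟨q, hqJ, hqmin⟩ := J.exists_min_image (fun p => (p.2 - ⟪p.1, y⟫) / ⟪p.1, w⟫) hJne
  obtain ⟨hqs, hqw⟩ := Finset.mem_filter.mp hqJ
  set t := (q.2 - ⟪q.1, y⟫) / ⟪q.1, w⟫ with htdef
  have ht0 : 0 ≤ t := div_nonneg (sub_nonneg.mpr (mem_HS.mp hy q hqs)) hqw.le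
  refine ⟨q, hqs, hqw, t, ht0, ?_, ?_⟩
  · rw [mem_HS]
    intro p hp
    have hexp : ⟪p.1, y + t • w⟫ = ⟪p.1, y⟫ + t * ⟪p.1, w⟫ := by
      rw [inner_add_right, real_inner_smul_right]
    rw [hexp]
    by_cases hpw : 0 < ⟪p.1, w⟫
    · have hmin := hqmin p (Finset.mem_filter.mpr ⟨hp, hpw⟩)
      have h2 : t * ⟪p.1, w⟫ ≤ p.2 - ⟪p.1, y⟫ := (le_div_iff₀ hpw).mp hmin
      linarith
    · push_neg at hpw
      have h2 : t * ⟪p.1, w⟫ ≤ 0 := mul_nonpos_of_nonneg_of_nonpos ht0 hpw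
      have := mem_HS.mp hy p hp
      linarith [this]
  · rw [inner_add_right, real_inner_smul_right, htdef, div_mul_cancel₀ _ (ne_of_gt hqw)]
    ring

lemma attain (n : E3) : ∀ (m : ℕ) (s : Finset (E3 × ℝ)),
    (HS s).Nonempty → (∀ u : E3, (∀ p ∈ s, ⟪p.1, u⟫ ≤ 0) → ⟪n, u⟫ ≤ 0) →
    Module.finrank ℝ (vectorSpan ℝ (HS s)) ≤ m →
    ∃ x ∈ HS s, ∀ y ∈ HS s, ⟪n, y⟫ ≤ ⟪n, x⟫ := by
  intro m
  induction m with
  | zero =>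
    intro s hne hcond hrank
    by_cases hc : ∃ p ∈ HS s, ∃ q ∈ HS s, ⟪n, q⟫ < ⟪n, p⟫
    · exfalso
      obtain ⟨p, hp, q, hq, hlt⟩ := hc
      have hwin : p - q ∈ vectorSpan ℝ (HS s) := by
        simpa using vsub_mem_vectorSpan ℝ hp hq
      have hw0 : p - q ≠ 0 := by
        intro h
        rw [sub_eq_zero] at h
        subst h
        exact lt_irrefl _ hlt
      have hbot : vectorSpan ℝ (HS s) = ⊥ :=
        Submodule.finrank_eq_zero.mp (Nat.le_zero.mp hrank)
      rw [hbot, Submodule.mem_bot] at hwin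
      exact hw0 hwin
    · push_neg at hc
      obtain ⟨x₀, hx₀⟩ := hne
      exact ⟨x₀, hx₀, fun y hy => hc y hy x₀ hx₀⟩
  | succ m IH =>
    intro s hne hcond hrank
    classical
    by_cases hc : ∃ p ∈ HS s, ∃ q ∈ HS s, ⟪n, q⟫ < ⟪n, p⟫
    swap
    · push_neg at hc
      obtain ⟨x₀, hx₀⟩ := hne
      exact ⟨x₀, hx₀, fun y hy => hc y hy x₀ hx₀⟩
    obtain ⟨p, hp, q, hq, hlt⟩ := hc
    set w := p - q with hwdef
    have hw : 0 < ⟪n, w⟫ := by rw [hwdef, inner_sub_right]; linarith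
    set s' := fun pr : E3 × ℝ => insert (-pr.1, -pr.2) s with hs'def
    have hsub : ∀ pr, HS (s' pr) ⊆ HS s := by
      intro pr x hx
      rw [mem_HS]
      exact fun r hr => mem_HS.mp hx r (Finset.mem_insert_of_mem hr)
    have htight : ∀ pr ∈ s, ∀ x ∈ HS (s' pr), ⟪pr.1, x⟫ = pr.2 := by
      intro pr hpr x hx
      have h1 := mem_HS.mp hx (-pr.1, -pr.2) (Finset.mem_insert_self _ _)
      have h2 := mem_HS.mp (hsub pr hx) pr hpr
      simp only [inner_neg_left] at h1
      linarith
    have hrank' : ∀ pr ∈ s, 0 < ⟪pr.1, w⟫ →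
        Module.finrank ℝ (vectorSpan ℝ (HS (s' pr))) ≤ m := by
      intro pr hpr hprw
      have hle : vectorSpan ℝ (HS (s' pr)) ≤ vectorSpan ℝ (HS s) := vectorSpan_mono ℝ (hsub pr)
      have hwin : w ∈ vectorSpan ℝ (HS s) := by
        rw [hwdef]; simpa using vsub_mem_vectorSpan ℝ hp hq
      have hall : ∀ v ∈ vectorSpan ℝ (HS (s' pr)), ⟪pr.1, v⟫ = 0 := by
        intro v hv
        rw [vectorSpan_def] at hv
        induction hv using Submodule.span_induction with
        | mem x hx =>
          obtain ⟨a, ha, b, hb, rfl⟩ := Set.mem_vsub.mp hx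
          have := htight pr hpr a ha
          have := htight pr hpr b hb
          simp only [vsub_eq_sub, inner_sub_right]
          linarith
        | zero => simp
        | add x y hx hy ihx ihy => rw [inner_add_right, ihx, ihy]; ring
        | smul a x hx ihx => rw [real_inner_smul_right, ihx]; ring
      have hwnot : w ∉ vectorSpan ℝ (HS (s' pr)) := by
        intro hmem
        have := hall w hmem
        linarith
      have hne' : vectorSpan ℝ (HS (s' pr)) ≠ vectorSpan ℝ (HS s) := by
        intro h
        exact hwnot (h ▸ hwin)
      have hlt2 := Submodule.finrank_lt_finrank_of_lt (lt_of_le_of_ne hle hne')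
      omega
    set T := s.filter (fun pr => 0 < ⟪pr.1, w⟫ ∧ (HS (s' pr)).Nonempty) with hTdef
    have hray : ∀ y ∈ HS s, ∃ pr ∈ T, ∃ y' ∈ HS (s' pr), ⟪n, y⟫ ≤ ⟪n, y'⟫ := by
      intro y hy
      obtain ⟨qq, hqs, hqw, t, ht0, hmem, htt⟩ := rayShoot s n w hw hcond hy
      have hy' : y + t • w ∈ HS (s' qq) := by
        rw [mem_HS]
        intro r hr
        rcases Finset.mem_insert.mp hr with h | h
        · subst h
          simp only [Set.mem_setOf_eq, inner_neg_left, htt, le_refl]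
        · exact mem_HS.mp hmem r h
      refine ⟨qq, Finset.mem_filter.mpr ⟨hqs, hqw, ⟨_, hy'⟩⟩, y + t • w, hy', ?_⟩
      rw [inner_add_right, real_inner_smul_right]
      nlinarith
    have hTne : T.Nonempty := by
      obtain ⟨y₀, hy₀⟩ := hne
      obtain ⟨pr, hpr, _⟩ := hray y₀ hy₀
      exact ⟨pr, hpr⟩
    have hmax : ∀ pr ∈ T, ∃ x ∈ HS (s' pr), ∀ y ∈ HS (s' pr), ⟪n, y⟫ ≤ ⟪n, x⟫ := by
      intro pr hpr
      obtain ⟨hprs, hprw, hne'⟩ := Finset.mem_filter.mp hpr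
      exact IH (s' pr) hne'
        (fun u hu => hcond u (fun r hr => hu r (Finset.mem_insert_of_mem hr)))
        (hrank' pr hprs hprw)
    choose! xF hxF1 hxF2 using hmax
    obtain ⟨prb, hprb, hbest⟩ := T.exists_max_image (fun pr => ⟪n, xF pr⟫) hTne
    refine ⟨xF prb, hsub prb (hxF1 prb hprb), ?_⟩
    intro y hy
    obtain ⟨pr, hprT, y', hy', hle⟩ := hray y hy
    calc ⟪n, y⟫ ≤ ⟪n, y'⟫ := hle
      _ ≤ ⟪n, xF pr⟫ := hxF2 pr hprT y' hy'
      _ ≤ ⟪n, xF prb⟫ := hbest pr hprT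

/-- The spherical image of an unbounded line-free convex polyhedron coincides
with the spherical image of its limit angle (recession cone). -/
theorem stmt13 (Q : Set E3) (hpoly : IsPolyhedron Q)
    (hunb : ¬ Bornology.IsBounded Q) (hint : (interior Q).Nonempty)
    (hline : ¬ ContainsLine Q) :
    sphImage Q = sphImage (recCone Q) := by
  obtain ⟨s, hs⟩ := hpoly
  have hQ : Q = HS s := hs
  have hQne : Q.Nonempty := hint.mono interior_subset
  obtain ⟨x₀, hx₀⟩ := hQne
  have h0 : (0 : E3) ∈ recCone Q := by
    intro x hx t ht
    simpa using hx
  have hrecHalf : ∀ u ∈ recCone Q, ∀ p ∈ s, ⟪p.1, u⟫ ≤ 0 := by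
    intro u hu p hp
    by_contra hpos
    push_neg at hpos
    have hx0p : ⟪p.1, x₀⟫ ≤ p.2 := mem_HS.mp (hQ ▸ hx₀) p hp
    have hdiv : 0 ≤ (p.2 - ⟪p.1, x₀⟫) / ⟪p.1, u⟫ := div_nonneg (sub_nonneg.mpr hx0p) hpos.le
    have hmem := hu x₀ hx₀ ((p.2 - ⟪p.1, x₀⟫) / ⟪p.1, u⟫ + 1) (by linarith)
    have hval : ⟪p.1, x₀ + ((p.2 - ⟪p.1, x₀⟫) / ⟪p.1, u⟫ + 1) • u⟫ ≤ p.2 :=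
      mem_HS.mp (hQ ▸ hmem) p hp
    rw [inner_add_right, real_inner_smul_right, add_mul,
      div_mul_cancel₀ _ (ne_of_gt hpos)] at hval
    linarith
  have hHalfrec : ∀ u : E3, (∀ p ∈ s, ⟪p.1, u⟫ ≤ 0) → u ∈ recCone Q := by
    intro u hu x hx t ht
    rw [hQ, mem_HS]
    intro p hp
    have hxp : ⟪p.1, x⟫ ≤ p.2 := mem_HS.mp (hQ ▸ hx) p hp
    rw [inner_add_right, real_inner_smul_right]
    nlinarith [hu p hp]
  ext n
  simp only [sphImage, Set.mem_setOf_eq]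
  constructor
  · rintro ⟨hn, x, hx, hsupp⟩
    refine ⟨hn, 0, h0, fun v hv => ?_⟩
    have h2 := hsupp (x + v) (by simpa using hv x hx 1 zero_le_one)
    simpa using h2
  · rintro ⟨hn, v₀, hv₀, hsupp⟩
    have hv02 : v₀ + v₀ ∈ recCone Q := by
      intro x hx t ht
      have h := hv₀ x hx (2 * t) (by linarith)
      have : x + t • (v₀ + v₀) = x + (2 * t) • v₀ := by
        rw [smul_add, mul_smul, two_smul]
      rw [this]
      exact h
    have hz : ⟪n, v₀⟫ = 0 := by
      have h1 := hsupp (v₀ + v₀) hv02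
      have h2 := hsupp 0 h0
      rw [add_sub_cancel_right] at h1
      rw [zero_sub, inner_neg_right] at h2
      linarith
    have hcond : ∀ u : E3, (∀ p ∈ s, ⟪p.1, u⟫ ≤ 0) → ⟪n, u⟫ ≤ 0 := by
      intro u hu
      have h1 := hsupp u (hHalfrec u hu)
      rw [inner_sub_right] at h1
      linarith
    have hrk : Module.finrank ℝ (vectorSpan ℝ (HS s)) ≤ 3 := by
      have h1 : Module.finrank ℝ (vectorSpan ℝ (HS s)) ≤ Module.finrank ℝ E3 :=
        Submodule.finrank_le _
      simpa [finrank_euclideanSpace] using h1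
    obtain ⟨x, hx, hmax⟩ := attain n 3 s (hQ ▸ ⟨x₀, hx₀⟩) hcond hrk
    refine ⟨hn, x, hQ ▸ hx, fun y hy => ?_⟩
    rw [inner_sub_right]
    have := hmax y (hQ ▸ hy)
    linarith
end
end
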